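/- arXiv:1306.3176 — 3 statements merged into one kernel-verified Lean document; each statement's English description precedes it below -/
import Mathlib

section
/- Let V, W be finite-dimensional representations of a reductive group G, x a point of the standard apartment, and equip V⊗F, W⊗F, and Hom(V,W)⊗F ≅ Hom_F(V⊗F, W⊗F) with their Moy-Prasad filtrations. Then Hom(V,W)̂_{x,r} = { f : f(V̂_{x,s}) ⊆ Ŵ_{x,s+r} for all s ∈ ℝ }. -/
open HahnSeries

variable {k V W : Type*} [Field k] [Algebra ℝ k]
  [AddCommGroup V] [Module k V] [AddCommGroup W] [Module k W]

/-- The convolution action of `Hom(V,W) ⊗ F ≅ Hom_F(V ⊗ F, W ⊗ F)` on `V ⊗ F`,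
where `U ⊗ F` is modelled by Laurent series with coefficients in `U`. -/
noncomputable def homApply (Φ : HahnSeries ℤ (V →ₗ[k] W)) (f : HahnSeries ℤ V) :
    HahnSeries ℤ W :=
  { coeff := fun a =>
      ∑ ij ∈ Finset.addAntidiagonal Φ.isPWO_support f.isPWO_support a,
        Φ.coeff ij.1 (f.coeff ij.2)
    isPWO_support' := Finset.isPWO_support_addAntidiagonal.mono (fun a ha => by
      simp only [Function.mem_support, ne_eq] at ha
      rw [Set.mem_setOf_eq]
      by_contra h
      rw [Finset.not_nonempty_iff_eq_empty] at h
      exact ha (by rw [show Finset.addAntidiagonal Φ.isPWO_support f.isPWO_support a = ∅ from h, Finset.sum_empty])) }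

/-- The Moy–Prasad filtration step `Û_{x,r}` on `U ⊗ F`, for a weight decomposition
`Uwt` of `U` and a point `x` of the standard apartment: the coefficient of `z^m`
must lie in the sum of the weight spaces `U_χ` with `⟨χ,x⟩ + m ≥ r`. -/
def mpFilt {U : Type*} [AddCommGroup U] [Module k U] {d : ℕ}
    (Uwt : (Fin d → ℤ) → Submodule k U) (x : Fin d → ℝ) (r : ℝ) :
    Set (HahnSeries ℤ U) :=
  {f | ∀ m : ℤ, f.coeff m ∈ ⨆ χ ∈ {χ : Fin d → ℤ | r ≤ (∑ i, (χ i : ℝ) * x i) + m}, Uwt χ}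

/-- The weight decomposition of `Hom(V, W)` induced by weight decompositions of `V`
and `W` (the `μ`-weight space consists of those `φ` with `φ(V_χ) ⊆ W_{χ+μ}` for all `χ`). -/
def homWt {d : ℕ} (Vwt : (Fin d → ℤ) → Submodule k V) (Wwt : (Fin d → ℤ) → Submodule k W)
    (μ : Fin d → ℤ) : Submodule k (V →ₗ[k] W) :=
  { carrier := {φ | ∀ χ : Fin d → ℤ, ∀ v ∈ Vwt χ, φ v ∈ Wwt (χ + μ)}
    add_mem' := fun hφ hψ χ v hv => (Wwt _).add_mem (hφ χ v hv) (hψ χ v hv)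
    zero_mem' := fun χ v _ => (Wwt _).zero_mem
    smul_mem' := fun c φ hφ χ v hv => (Wwt _).smul_mem c (hφ χ v hv) }

lemma mem_homWt_iff {d : ℕ} {Vwt : (Fin d → ℤ) → Submodule k V}
    {Wwt : (Fin d → ℤ) → Submodule k W} {μ : Fin d → ℤ} {φ : V →ₗ[k] W} :
    φ ∈ homWt Vwt Wwt μ ↔ ∀ χ : Fin d → ℤ, ∀ v ∈ Vwt χ, φ v ∈ Wwt (χ + μ) := Iff.rfl

/-- From an internal direct sum decomposition of a finite module, get a finite family of
projections summing to the identity. -/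
lemma exists_mp_proj {U : Type*} [AddCommGroup U] [Module k U] [Module.Finite k U]
    {ι : Type*} [DecidableEq ι] (A : ι → Submodule k U) (h : DirectSum.IsInternal A) :
    ∃ (F : Finset ι) (P : ι → (U →ₗ[k] U)),
      (∀ i u, P i u ∈ A i) ∧
      (∀ i j u, u ∈ A j → P i u = if i = j then u else 0) ∧
      (∀ u, ∑ i ∈ F, P i u = u) := by
  classical
  set e := LinearEquiv.ofBijective (DirectSum.coeLinearMap A) h with he
  set P : ι → (U →ₗ[k] U) := fun i =>
    (A i).subtype ∘ₗ (DirectSum.component k ι (fun i => A i) i) ∘ₗ e.symm.toLinearMap with hPdef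
  have hP1 : ∀ i u, P i u ∈ A i := fun i u => (e.symm u i).2
  have hP2 : ∀ i j u, u ∈ A j → P i u = if i = j then u else 0 := by
    intro i j u hu
    by_cases hij : i = j
    · subst hij
      simp only [if_pos rfl, hPdef, LinearMap.coe_comp, Function.comp_apply,
        LinearEquiv.coe_toLinearMap, Submodule.coe_subtype]
      rw [show DirectSum.component k ι (fun i => A i) i (e.symm u) = e.symm u i from rfl,
        h.ofBijective_coeLinearMap_of_mem hu]
      simp
    · simp only [if_neg hij, hPdef, LinearMap.coe_comp, Function.comp_apply,
        LinearEquiv.coe_toLinearMap, Submodule.coe_subtype]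
      rw [show DirectSum.component k ι (fun i => A i) i (e.symm u) = e.symm u i from rfl,
        h.ofBijective_coeLinearMap_of_mem_ne (fun hji => hij hji.symm) hu]
      rfl
  have key : ∀ (u : U) (F : Finset ι), (e.symm u).support ⊆ F → ∑ i ∈ F, (P i) u = u := by
    intro u F hF
    have h1 : ∑ i ∈ F, (P i) u = ∑ i ∈ F, ((e.symm u) i : U) := rfl
    rw [h1, ← Finset.sum_subset hF (fun i _ hi => by
      rw [DFinsupp.notMem_support_iff.mp hi, Submodule.coe_zero])]
    conv_rhs => rw [← e.apply_symm_apply u]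
    show _ = DirectSum.coeLinearMap A (e.symm u)
    rw [DirectSum.coeLinearMap_eq_dfinsuppSum]
    rfl
  obtain ⟨S, hS⟩ := Module.Finite.fg_top (R := k) (M := U)
  refine ⟨S.sup (fun u => (e.symm u).support), P, hP1, hP2, ?_⟩
  have : (∑ i ∈ S.sup (fun u => (e.symm u).support), P i) = LinearMap.id := by
    apply LinearMap.ext_on hS
    intro u hu
    rw [LinearMap.sum_apply, LinearMap.id_apply]
    exact key u _ (by simpa using Finset.le_sup (f := fun u => (e.symm u).support) hu)
  intro u
  calc ∑ i ∈ S.sup (fun u => (e.symm u).support), P i u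
      = (∑ i ∈ S.sup (fun u => (e.symm u).support), P i) u := (LinearMap.sum_apply _ _ _).symm
    _ = u := by rw [this, LinearMap.id_apply]

/-- A projection kills anything in the span of the other weight spaces. -/
lemma mp_proj_kill {U : Type*} [AddCommGroup U] [Module k U] {ι : Type*} [DecidableEq ι]
    (A : ι → Submodule k U) (P : ι → (U →ₗ[k] U))
    (hP : ∀ i j u, u ∈ A j → P i u = if i = j then u else 0)
    {S : Set ι} {i : ι} (hi : i ∉ S) {u : U} (hu : u ∈ ⨆ j ∈ S, A j) : P i u = 0 := by
  have hle : (⨆ j ∈ S, A j) ≤ LinearMap.ker (P i) := by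
    refine iSup₂_le fun j hj => ?_
    intro u hu
    rw [LinearMap.mem_ker, hP i j u hu, if_neg]
    rintro rfl; exact hi hj
  exact hle hu

/-- Applying an element of a br-sup of `homWt` spaces to an element of a br-sup of
weight spaces lands in the corresponding sup of weight spaces of `W`. -/
lemma homWt_apply_mem {d : ℕ} (Vwt : (Fin d → ℤ) → Submodule k V)
    (Wwt : (Fin d → ℤ) → Submodule k W) {A B T : Set (Fin d → ℤ)}
    (hT : ∀ μ ∈ A, ∀ χ ∈ B, χ + μ ∈ T)
    {φ : V →ₗ[k] W} (hφ : φ ∈ ⨆ μ ∈ A, homWt Vwt Wwt μ)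
    {v : V} (hv : v ∈ ⨆ χ ∈ B, Vwt χ) :
    φ v ∈ ⨆ ν ∈ T, Wwt ν := by
  rw [iSup_subtype'] at hφ hv
  induction hφ using Submodule.iSup_induction' with
  | mem μ φ hφi =>
    induction hv using Submodule.iSup_induction' with
    | mem χ v hvi =>
      have h1 : φ v ∈ Wwt (χ.1 + μ.1) := hφi χ.1 v hvi
      exact le_iSup₂ (f := fun ν (_ : ν ∈ T) => Wwt ν) (χ.1 + μ.1) (hT μ.1 μ.2 χ.1 χ.2) h1
    | zero => rw [map_zero]; exact Submodule.zero_mem _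
    | add a b _ _ ha hb => rw [map_add]; exact Submodule.add_mem _ ha hb
  | zero => rw [LinearMap.zero_apply]; exact Submodule.zero_mem _
  | add φ ψ _ _ hφ' hψ' =>
    rw [LinearMap.add_apply]; exact Submodule.add_mem _ hφ' hψ'

lemma homApply_coeff_single (Φ : HahnSeries ℤ (V →ₗ[k] W)) (v : V) (a : ℤ) :
    (homApply Φ (HahnSeries.single (0 : ℤ) v)).coeff a = Φ.coeff a v := by
  classical
  show ∑ ij ∈ Finset.addAntidiagonal Φ.isPWO_support
      (HahnSeries.single (0 : ℤ) v).isPWO_support a,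
      Φ.coeff ij.1 ((HahnSeries.single (0 : ℤ) v).coeff ij.2) = Φ.coeff a v
  have hsub : Finset.addAntidiagonal Φ.isPWO_support
      (HahnSeries.single (0 : ℤ) v).isPWO_support a ⊆ {((a : ℤ), (0 : ℤ))} := by
    intro ij hij
    rw [Finset.addAntidiagonal, Finset.mem_addAntidiagonal] at hij
    obtain ⟨h1, h2, h3⟩ := hij
    have h4 : ij.2 = 0 := HahnSeries.support_single_subset h2
    have h5 : ij.1 = a := by omega
    simp only [Finset.mem_singleton]
    exact Prod.ext h5 h4
  rcases Finset.subset_singleton_iff.mp hsub with h | h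
  · rw [h, Finset.sum_empty]
    by_cases hv : v = 0
    · rw [hv, map_zero]
    · have : ((a : ℤ), (0 : ℤ)) ∉ Finset.addAntidiagonal Φ.isPWO_support
          (HahnSeries.single (0 : ℤ) v).isPWO_support a := by rw [h]; simp
      rw [Finset.addAntidiagonal, Finset.mem_addAntidiagonal] at this
      push_neg at this
      have h0 : (0 : ℤ) ∈ (HahnSeries.single (0 : ℤ) v).support := by
        rw [HahnSeries.mem_support, HahnSeries.coeff_single_same]; exact hv
      have := this
      by_cases hΦ : a ∈ Φ.support
      · exact absurd (add_zero a) (this hΦ h0)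
      · rw [HahnSeries.mem_support, not_not] at hΦ
        rw [hΦ, LinearMap.zero_apply]
  · rw [h, Finset.sum_singleton, HahnSeries.coeff_single_same]

/-- Let `V, W` be finite-dimensional representations of a reductive group
`G`, `x` a point of the standard apartment, and equip `V⊗F`, `W⊗F` and
`Hom(V,W)⊗F ≅ Hom_F(V⊗F, W⊗F)` with their Moy–Prasad filtrations.  Then
`Hom(V,W)̂_{x,r} = { f : f(V̂_{x,s}) ⊆ Ŵ_{x,s+r} for all s ∈ ℝ }`. -/
theorem stmt4 {d : ℕ}
    (Vwt : (Fin d → ℤ) → Submodule k V) (Wwt : (Fin d → ℤ) → Submodule k W)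
    (hV : DirectSum.IsInternal Vwt) (hW : DirectSum.IsInternal Wwt)
    [Module.Finite k V] [Module.Finite k W]
    (x : Fin d → ℝ) (r : ℝ) (Φ : HahnSeries ℤ (V →ₗ[k] W)) :
    Φ ∈ mpFilt (homWt Vwt Wwt) x r
    ↔ ∀ s : ℝ, ∀ f ∈ mpFilt Vwt x s, homApply Φ f ∈ mpFilt Wwt x (s + r) := by
  classical
  constructor
  · -- forward direction
    intro hΦ s f hf a
    show (∑ ij ∈ Finset.addAntidiagonal Φ.isPWO_support f.isPWO_support a,
        Φ.coeff ij.1 (f.coeff ij.2)) ∈ _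
    refine Submodule.sum_mem _ fun ij hij => ?_
    rw [Finset.addAntidiagonal, Finset.mem_addAntidiagonal] at hij
    obtain ⟨-, -, h3⟩ := hij
    refine homWt_apply_mem Vwt Wwt (A := {μ | r ≤ (∑ i, (μ i : ℝ) * x i) + ij.1})
      (B := {χ | s ≤ (∑ i, (χ i : ℝ) * x i) + ij.2}) ?_ (hΦ ij.1) (hf ij.2)
    intro μ hμ χ hχ
    simp only [Set.mem_setOf_eq] at hμ hχ ⊢
    have hsum : ∑ i, (((χ + μ) i : ℤ) : ℝ) * x i
        = (∑ i, (χ i : ℝ) * x i) + ∑ i, (μ i : ℝ) * x i := by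
      rw [← Finset.sum_add_distrib]
      refine Finset.sum_congr rfl fun i _ => ?_
      simp only [Pi.add_apply]
      push_cast
      ring
    have ha : ((a : ℤ) : ℝ) = (ij.1 : ℝ) + (ij.2 : ℝ) := by
      rw [← h3]; push_cast; ring
    rw [hsum, ha]
    linarith
  · -- reverse direction
    intro H m
    obtain ⟨FV, PV, hPV1, hPV2, hPV3⟩ := exists_mp_proj Vwt hV
    obtain ⟨FW, PW, hPW1, hPW2, hPW3⟩ := exists_mp_proj Wwt hW
    -- key consequence of the hypothesis
    have K : ∀ (χ : Fin d → ℤ) (v : V), v ∈ Vwt χ →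
        Φ.coeff m v ∈ ⨆ ν ∈ {ν : Fin d → ℤ |
          (∑ i, (χ i : ℝ) * x i) + r ≤ (∑ i, (ν i : ℝ) * x i) + m}, Wwt ν := by
      intro χ v hv
      set s : ℝ := ∑ i, (χ i : ℝ) * x i with hs
      have hf : HahnSeries.single (0 : ℤ) v ∈ mpFilt Vwt x s := by
        intro m'
        by_cases hm' : m' = 0
        · subst hm'
          rw [HahnSeries.coeff_single_same]
          refine le_iSup₂ (f := fun χ' (_ : χ' ∈ _) => Vwt χ') χ ?_ hv
          simp [hs]
        · rw [HahnSeries.coeff_single_of_ne hm']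
          exact Submodule.zero_mem _
      have := H s _ hf m
      rw [homApply_coeff_single] at this
      exact this
    have hrep : Φ.coeff m = ∑ χ ∈ FV, ∑ ν ∈ FW, (PW ν ∘ₗ Φ.coeff m ∘ₗ PV χ) := by
      ext v
      rw [LinearMap.sum_apply]
      simp only [LinearMap.sum_apply, LinearMap.coe_comp, Function.comp_apply]
      calc Φ.coeff m v = Φ.coeff m (∑ χ ∈ FV, PV χ v) := by rw [hPV3]
        _ = ∑ χ ∈ FV, Φ.coeff m (PV χ v) := by rw [map_sum]
        _ = ∑ χ ∈ FV, ∑ ν ∈ FW, PW ν (Φ.coeff m (PV χ v)) := by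
            refine Finset.sum_congr rfl fun χ _ => ?_
            rw [hPW3]
    rw [hrep]
    refine Submodule.sum_mem _ fun χ _ => Submodule.sum_mem _ fun ν _ => ?_
    by_cases hcase : (∑ i, (χ i : ℝ) * x i) + r ≤ (∑ i, (ν i : ℝ) * x i) + m
    · -- the component lies in homWt (ν - χ), and ν - χ satisfies the bound
      have hmem : (PW ν ∘ₗ Φ.coeff m ∘ₗ PV χ) ∈ homWt Vwt Wwt (ν - χ) := by
        rw [mem_homWt_iff]
        intro χ' v hv
        simp only [LinearMap.coe_comp, Function.comp_apply]
        rw [hPV2 χ χ' v hv]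
        by_cases hχ : χ = χ'
        · subst hχ
          rw [if_pos rfl]
          have : χ + (ν - χ) = ν := by ring
          rw [this]
          exact hPW1 ν _
        · rw [if_neg hχ, map_zero, map_zero]
          exact Submodule.zero_mem _
      refine le_iSup₂ (f := fun μ (_ : μ ∈ _) => homWt Vwt Wwt μ) (ν - χ) ?_ hmem
      simp only [Set.mem_setOf_eq]
      have hsum : ∑ i, (((ν - χ) i : ℤ) : ℝ) * x i
          = (∑ i, (ν i : ℝ) * x i) - ∑ i, (χ i : ℝ) * x i := by
        rw [← Finset.sum_sub_distrib]
        refine Finset.sum_congr rfl fun i _ => ?_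
        simp only [Pi.sub_apply]
        push_cast
        ring
      rw [hsum]
      linarith
    · -- the component vanishes
      have hzero : (PW ν ∘ₗ Φ.coeff m ∘ₗ PV χ) = 0 := by
        ext v
        simp only [LinearMap.coe_comp, Function.comp_apply, LinearMap.zero_apply]
        exact mp_proj_kill Wwt PW hPW2 hcase (K χ (PV χ v) (hPV1 χ v))
      rw [hzero]
      exact Submodule.zero_mem _
end

section
/- Let F = k((z)), let E = k((u)) with u^e = z be a degree-e extension, and write τ_E = u·d/du, so τ_E = e·τ on F. Let G be reductive with maximal torus T, V a representation, x in the standard apartment of G over F, and let ex denote the point with (ex)~ = e·x̃ in the apartment over E. Then for all r ∈ ℝ, the F-graded piece V̂_x(r) equals (V ⊗ E)_{ex}(er) ∩ (V ⊗ F), and V̂_{x,r} = (V ⊗ E)_{ex,er} ∩ (V ⊗ F). -/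
open HahnSeries

variable {k V : Type*} [Field k] [Algebra ℝ k] [AddCommGroup V] [Module k V]

/-- The inclusion `V ⊗ F ⊆ V ⊗ E` for the degree-`e` extension `E = k((u))`,
`u^e = z`, of `F = k((z))`: a series in `z` becomes a series in `u` via `z = u^e`,
i.e. the coefficient of `z^m` becomes the coefficient of `u^{em}`. -/
noncomputable def stretch (e : ℕ) (he : 0 < e) (f : HahnSeries ℤ V) : HahnSeries ℤ V :=
  HahnSeries.embDomain
    (OrderEmbedding.ofStrictMono (fun m : ℤ => (e : ℤ) * m)
      (fun a b h => mul_lt_mul_of_pos_left h (by exact_mod_cast he))) f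


lemma stretch_coeff_mul (e : ℕ) (he : 0 < e) (f : HahnSeries ℤ V) (m : ℤ) :
    (stretch e he f).coeff ((e : ℤ) * m) = f.coeff m :=
  HahnSeries.embDomain_coeff

lemma stretch_coeff_not_dvd (e : ℕ) (he : 0 < e) (f : HahnSeries ℤ V) (n : ℤ)
    (hn : ¬ (e : ℤ) ∣ n) : (stretch e he f).coeff n = 0 := by
  apply HahnSeries.embDomain_notin_range
  rintro ⟨m, hm⟩
  exact hn ⟨m, hm.symm⟩

lemma stretch_key {d : ℕ} (Vwt : (Fin d → ℤ) → Submodule k V)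
    (e : ℕ) (he : 0 < e) (C D : (Fin d → ℤ) → ℤ → Prop)
    (h : ∀ χ m, C χ ((e : ℤ) * m) ↔ D χ m) :
    (Set.range (stretch (V := V) e he)
        ∩ {gE : HahnSeries ℤ V | ∀ n : ℤ,
            gE.coeff n ∈ ⨆ χ ∈ {χ : Fin d → ℤ | C χ n}, Vwt χ}
      = stretch (V := V) e he ''
          {f : HahnSeries ℤ V | ∀ m : ℤ,
            f.coeff m ∈ ⨆ χ ∈ {χ : Fin d → ℤ | D χ m}, Vwt χ}) := by
  ext g
  constructor
  · rintro ⟨⟨f, rfl⟩, hg⟩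
    refine ⟨f, fun m => ?_, rfl⟩
    have := hg ((e : ℤ) * m)
    rw [stretch_coeff_mul] at this
    have hset : {χ : Fin d → ℤ | C χ ((e : ℤ) * m)} = {χ : Fin d → ℤ | D χ m} := by
      ext χ; exact h χ m
    rwa [hset] at this
  · rintro ⟨f, hf, rfl⟩
    refine ⟨⟨f, rfl⟩, fun n => ?_⟩
    by_cases hn : (e : ℤ) ∣ n
    · obtain ⟨m, rfl⟩ := hn
      rw [stretch_coeff_mul]
      have hset : {χ : Fin d → ℤ | C χ ((e : ℤ) * m)} = {χ : Fin d → ℤ | D χ m} := by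
        ext χ; exact h χ m
      rw [hset]; exact hf m
    · rw [stretch_coeff_not_dvd e he f n hn]
      exact Submodule.zero_mem _

/-- Let `E = k((u))` with `u^e = z` be a degree-`e` extension of
`F = k((z))`, so `τ_E = u·d/du` restricts to `e·τ` on `F`.  Let `V` be a
representation of `G` with weight decomposition `Vwt`, `x` in the standard apartment
over `F`, and `ex` the point with `(ex)~ = e·x̃` over `E`.  Then for all `r`, the
`F`-graded piece `V̂ₓ(r)` equals `(V⊗E)_{ex}(er) ∩ (V⊗F)`, and the filtration step
`V̂_{x,r}` equals `(V⊗E)_{ex,er} ∩ (V⊗F)`. -/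
theorem stmt15 {d : ℕ}
    (Vwt : (Fin d → ℤ) → Submodule k V) (hinternal : DirectSum.IsInternal Vwt)
    (x : Fin d → ℝ) (e : ℕ) (he : 0 < e) (r : ℝ) :
    -- graded pieces
    (Set.range (stretch (V := V) e he)
        ∩ {gE : HahnSeries ℤ V | ∀ n : ℤ,
            gE.coeff n ∈ ⨆ χ ∈ {χ : Fin d → ℤ |
              (e : ℝ) * (∑ i, (χ i : ℝ) * x i) + n = (e : ℝ) * r}, Vwt χ}
      = stretch (V := V) e he ''
          {f : HahnSeries ℤ V | ∀ m : ℤ,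
            f.coeff m ∈ ⨆ χ ∈ {χ : Fin d → ℤ |
              (∑ i, (χ i : ℝ) * x i) + m = r}, Vwt χ})
    ∧
    -- filtration steps
    (Set.range (stretch (V := V) e he)
        ∩ {gE : HahnSeries ℤ V | ∀ n : ℤ,
            gE.coeff n ∈ ⨆ χ ∈ {χ : Fin d → ℤ |
              (e : ℝ) * r ≤ (e : ℝ) * (∑ i, (χ i : ℝ) * x i) + n}, Vwt χ}
      = stretch (V := V) e he ''
          {f : HahnSeries ℤ V | ∀ m : ℤ,
            f.coeff m ∈ ⨆ χ ∈ {χ : Fin d → ℤ |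
              r ≤ (∑ i, (χ i : ℝ) * x i) + m}, Vwt χ}) := by
  have he' : (e : ℝ) ≠ 0 := by exact_mod_cast he.ne'
  constructor
  · apply stretch_key
    intro χ m
    push_cast
    rw [show (e : ℝ) * (∑ i, (χ i : ℝ) * x i) + (e : ℝ) * (m : ℝ)
        = (e : ℝ) * ((∑ i, (χ i : ℝ) * x i) + m) by ring]
    exact mul_right_inj' he'
  · apply stretch_key
    intro χ m
    push_cast
    rw [show (e : ℝ) * (∑ i, (χ i : ℝ) * x i) + (e : ℝ) * (m : ℝ)
        = (e : ℝ) * ((∑ i, (χ i : ℝ) * x i) + m) by ring]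
    exact mul_le_mul_iff_right₀ (by exact_mod_cast he)
end

section
/- Let F = k((z)), and let x, y be two points of the standard apartment A_0 of GL_n (or any reductive G), identified with elements x̃, ỹ ∈ t_ℝ. Set δ_{x,y} = (x̃ − ỹ) dz/z ∈ ĝ^∨ (via the residue-trace pairing). Then for every g in the intersection of parahoric subgroups Ĝ_x ∩ Ĝ_y, one has Ad*(g)(δ_{x,y}) ∈ δ_{x,y} + ĝ^∨_{x,0+} + ĝ^∨_{y,0+}. (Proof idea: δ_{x,y} = ∂_y − ∂_x where ∂_x = d + x̃ dz/z is the canonical flat structure with (∂_x − i dz/z)V̂_x(i) = 0, and g∂_x g^{-1} ∈ ∂_x + ĝ^∨_{x,0+}, similarly for y.) -/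
open HahnSeries Matrix

variable {k : Type*} [Field k] [Algebra ℝ k]

/-- The Moy–Prasad filtration step `gl(Fⁿ)_{x,r}` for a point `x` of the standard
apartment of `GL_n` (identified with `x̃ ∈ t_ℝ ≅ ℝⁿ`): the `(i,j)`-entry `E_{ij} z^m`
has `τ + ad(x̃)`-eigenvalue `m + xᵢ − xⱼ`, so coefficients with `m + xᵢ − xⱼ < r`
must vanish. -/
def glFilt (n : ℕ) (x : Fin n → ℝ) (r : ℝ) :
    Set (Matrix (Fin n) (Fin n) (LaurentSeries k)) :=
  {M | ∀ (i j : Fin n) (m : ℤ), (m : ℝ) + x i - x j < r → (M i j).coeff m = 0}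

/-- The step `ĝ^∨_{x,0+}` of the dual filtration, identified via the residue-trace
pairing with the matrices whose `(i,j)`-entry coefficients vanish whenever
`m + xᵢ − xⱼ ≤ 0`. -/
def glFiltPlus (n : ℕ) (x : Fin n → ℝ) :
    Set (Matrix (Fin n) (Fin n) (LaurentSeries k)) :=
  {M | ∀ (i j : Fin n) (m : ℤ), (m : ℝ) + x i - x j ≤ 0 → (M i j).coeff m = 0}

/-- Truncation of a Laurent series: keep only coefficients at `m` with `c < m`. -/
noncomputable def truncAbove (c : ℝ) (f : LaurentSeries k) : LaurentSeries k where
  coeff := fun m => if c < (m : ℝ) then f.coeff m else 0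
  isPWO_support' := f.isPWO_support'.mono (fun m hm => by
    simp only [Function.mem_support] at hm ⊢
    intro h; apply hm; simp [h])

lemma coeff_fsum {ι : Type*} (s : Finset ι) (f : ι → LaurentSeries k) (m : ℤ) :
    (∑ i ∈ s, f i).coeff m = ∑ i ∈ s, (f i).coeff m :=
  map_sum (HahnSeries.coeff.addMonoidHom m) f s

/-- Let `x, y` be two points of the standard apartment `A₀` of `GL_n`
over `F = k((z))`, identified with `x̃, ỹ ∈ t_ℝ`, and set
`δ_{x,y} = (x̃ − ỹ) dz/z ∈ ĝ^∨` (via the residue-trace pairing, a constant diagonal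
matrix).  Then for every `g` in the intersection of parahoric subgroups
`Ĝₓ ∩ Ĝ_y` (i.e. `g, g⁻¹ ∈ gl_{x,0} ∩ gl_{y,0}`) one has
`Ad*(g)(δ_{x,y}) ∈ δ_{x,y} + ĝ^∨_{x,0+} + ĝ^∨_{y,0+}`. -/
theorem stmt19 (n : ℕ) (x y : Fin n → ℝ)
    (g : GL (Fin n) (LaurentSeries k))
    (hgx : (g : Matrix (Fin n) (Fin n) (LaurentSeries k)) ∈ glFilt (k := k) n x 0)
    (hgx' : ((g⁻¹ : GL (Fin n) (LaurentSeries k)) :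
      Matrix (Fin n) (Fin n) (LaurentSeries k)) ∈ glFilt (k := k) n x 0)
    (hgy : (g : Matrix (Fin n) (Fin n) (LaurentSeries k)) ∈ glFilt (k := k) n y 0)
    (hgy' : ((g⁻¹ : GL (Fin n) (LaurentSeries k)) :
      Matrix (Fin n) (Fin n) (LaurentSeries k)) ∈ glFilt (k := k) n y 0) :
    ∀ δ : Matrix (Fin n) (Fin n) (LaurentSeries k),
      δ = Matrix.diagonal (fun i => single (0 : ℤ) (algebraMap ℝ k (x i - y i))) →
      ∃ A ∈ glFiltPlus (k := k) n x, ∃ B ∈ glFiltPlus (k := k) n y,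
        (g : Matrix (Fin n) (Fin n) (LaurentSeries k)) * δ *
            ((g⁻¹ : GL (Fin n) (LaurentSeries k)) :
              Matrix (Fin n) (Fin n) (LaurentSeries k)) - δ
          = A + B := by
  intro δ hδ
  set gm := (g : Matrix (Fin n) (Fin n) (LaurentSeries k)) with hgm
  set hmm := ((g⁻¹ : GL (Fin n) (LaurentSeries k)) :
      Matrix (Fin n) (Fin n) (LaurentSeries k)) with hhm
  have hgh : gm * hmm = 1 := by
    rw [hgm, hhm]
    exact_mod_cast g.mul_inv
  -- key pointwise vanishing
  have key : ∀ (i j : Fin n) (m : ℤ), (m : ℝ) + x i - x j ≤ 0 →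
      (m : ℝ) + y i - y j ≤ 0 → ((gm * δ * hmm - δ) i j).coeff m = 0 := by
    intro i j m hx0 hy0
    have hterm : ∀ l : Fin n, ((gm i l * hmm l j).coeff m ≠ 0) →
        x l - y l = x i - y i := by
      intro l hne
      rw [HahnSeries.coeff_mul] at hne
      obtain ⟨pq, hmem, hpq⟩ := Finset.exists_ne_zero_of_sum_ne_zero hne
      rw [Finset.mem_addAntidiagonal] at hmem
      obtain ⟨hp, hq, hsum⟩ := hmem
      have hgp : ¬ ((pq.1 : ℝ) + x i - x l < 0) := fun h => hp (hgx i l pq.1 h)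
      have hhq : ¬ ((pq.2 : ℝ) + x l - x j < 0) := fun h => hq (hgx' l j pq.2 h)
      have hgp' : ¬ ((pq.1 : ℝ) + y i - y l < 0) := fun h => hp (hgy i l pq.1 h)
      have hhq' : ¬ ((pq.2 : ℝ) + y l - y j < 0) := fun h => hq (hgy' l j pq.2 h)
      push_neg at hgp hhq hgp' hhq'
      have hsum' : ((pq.1 : ℝ) + (pq.2 : ℝ)) = (m : ℝ) := by exact_mod_cast congrArg Int.cast hsum
      have e1 : (pq.1 : ℝ) + x i - x l = 0 := by nlinarith
      have e2 : (pq.1 : ℝ) + y i - y l = 0 := by nlinarith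
      linarith
    -- compute the coefficient
    have hmul : (gm * δ * hmm) i j = ∑ l : Fin n,
        HahnSeries.single (0 : ℤ) (algebraMap ℝ k (x l - y l)) * (gm i l * hmm l j) := by
      rw [Matrix.mul_assoc, hδ, Matrix.mul_apply]
      refine Finset.sum_congr rfl (fun l _ => ?_)
      rw [Matrix.diagonal_mul, mul_left_comm]
    have hcoeff : ((gm * δ * hmm) i j).coeff m =
        ∑ l : Fin n, algebraMap ℝ k (x l - y l) * (gm i l * hmm l j).coeff m := by
      rw [hmul, coeff_fsum]
      refine Finset.sum_congr rfl (fun l _ => ?_)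
      exact HahnSeries.coeff_single_zero_mul
    have hcoeff2 : ((gm * δ * hmm) i j).coeff m =
        algebraMap ℝ k (x i - y i) * ((gm * hmm) i j).coeff m := by
      rw [hcoeff, Matrix.mul_apply, coeff_fsum, Finset.mul_sum]
      refine Finset.sum_congr rfl (fun l _ => ?_)
      by_cases h : (gm i l * hmm l j).coeff m = 0
      · rw [h, mul_zero, mul_zero]
      · rw [hterm l h]
    have hdelta : (δ i j).coeff m =
        algebraMap ℝ k (x i - y i) *
          ((1 : Matrix (Fin n) (Fin n) (LaurentSeries k)) i j).coeff m := by
      rw [hδ]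
      by_cases hij : i = j
      · subst hij
        rw [Matrix.diagonal_apply_eq, Matrix.one_apply_eq, HahnSeries.coeff_single,
          HahnSeries.coeff_one]
        by_cases hm : m = 0 <;> simp [hm]
      · rw [Matrix.diagonal_apply_ne _ hij, Matrix.one_apply_ne hij]
        simp
    have : ((gm * δ * hmm - δ) i j).coeff m
        = ((gm * δ * hmm) i j).coeff m - (δ i j).coeff m := by
      rw [Matrix.sub_apply, HahnSeries.coeff_sub]
    rw [this, hcoeff2, hdelta, hgh, sub_self]
  set C := gm * δ * hmm - δ with hC
  set A : Matrix (Fin n) (Fin n) (LaurentSeries k) :=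
    fun i j => truncAbove (x j - x i) (C i j) with hA
  refine ⟨A, ?_, C - A, ?_, ?_⟩
  · intro i j m hle
    show (truncAbove (x j - x i) (C i j)).coeff m = 0
    simp only [truncAbove]
    rw [if_neg]; linarith
  · intro i j m hle
    have hsub : ((C - A) i j).coeff m = (C i j).coeff m - (A i j).coeff m := by
      rw [Matrix.sub_apply, HahnSeries.coeff_sub]
    rw [hsub]
    have hAc : (A i j).coeff m = if x j - x i < (m : ℝ) then (C i j).coeff m else 0 := rfl
    rw [hAc]
    by_cases h : x j - x i < (m : ℝ)
    · rw [if_pos h, sub_self]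
    · rw [if_neg h, sub_zero]
      exact key i j m (by linarith) hle
  · abel
end
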